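/- Let (Ω, ℱ, P) be a probability space, let A, S : Ω → {0, 1} and a random variable X be measurable, and let Y₀, Y₁ be integrable real random variables. Set Y = A·Y₁ + (1 − A)·Y₀ and let m be the σ-algebra generated by (X, A, S). Let λ be a version of the conditional expectation E[(1 − A)·Y₁ + A·Y₀ | m]. Then E[(1 − S)·(Y₁ − Y₀)] = E[(1 − S)·(2A − 1)·(Y − λ)]. -/

import Mathlib

open MeasureTheory

/-- Confounded-part decomposition (Lemma 1): with `Y = A·Y₁ + (1 − A)·Y₀`,
`m = σ(X, A, S)` and `λ` a version of `E[(1 − A)·Y₁ + A·Y₀ | m]`,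
`E[(1 − S)·(Y₁ − Y₀)] = E[(1 − S)·(2A − 1)·(Y − λ)]`. -/
theorem confounded_part_decomposition
    {Ω : Type*} {mΩ : MeasurableSpace Ω} (P : Measure Ω) [IsProbabilityMeasure P]
    (A S X : Ω → ℝ)
    (hA : Measurable A) (hS : Measurable S) (hX : Measurable X)
    (hA01 : ∀ ω, A ω = 0 ∨ A ω = 1) (hS01 : ∀ ω, S ω = 0 ∨ S ω = 1)
    (Y₀ Y₁ : Ω → ℝ) (hY₀ : Integrable Y₀ P) (hY₁ : Integrable Y₁ P)
    (Y : Ω → ℝ) (hY : ∀ ω, Y ω = A ω * Y₁ ω + (1 - A ω) * Y₀ ω)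
    (m : MeasurableSpace Ω)
    (hmdef : m = MeasurableSpace.comap (fun ω => (X ω, A ω, S ω)) inferInstance)
    (lam : Ω → ℝ)
    (hlam : lam =ᵐ[P] P[fun ω => (1 - A ω) * Y₁ ω + A ω * Y₀ ω|m]) :
    ∫ ω, (1 - S ω) * (Y₁ ω - Y₀ ω) ∂P =
      ∫ ω, (1 - S ω) * (2 * A ω - 1) * (Y ω - lam ω) ∂P := by
  have hm : m ≤ mΩ := by
    rw [hmdef]
    exact (hX.prodMk (hA.prodMk hS)).comap_le
  -- measurability of A and S with respect to m
  have hφ : Measurable[m] (fun ω => (X ω, A ω, S ω)) := by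
    rw [hmdef]; exact Measurable.of_comap_le le_rfl
  have hAm : Measurable[m] A := (measurable_fst.comp measurable_snd).comp hφ
  have hSm : Measurable[m] S := (measurable_snd.comp measurable_snd).comp hφ
  set g : Ω → ℝ := fun ω => (1 - S ω) * (2 * A ω - 1) with hg_def
  have hgm : StronglyMeasurable[m] g :=
    (((stronglyMeasurable_const.sub hSm.stronglyMeasurable)).mul
      ((stronglyMeasurable_const.mul hAm.stronglyMeasurable).sub stronglyMeasurable_const))
  have hgbdd : ∀ ω, ‖g ω‖ ≤ 1 := by
    intro ω
    rcases hA01 ω with h | h <;> rcases hS01 ω with h' | h' <;>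
      simp [hg_def, h, h', abs_le] <;> norm_num
  have hgmeas : AEStronglyMeasurable[mΩ] g P := ((hgm.mono hm)).aestronglyMeasurable
  set f : Ω → ℝ := fun ω => (1 - A ω) * Y₁ ω + A ω * Y₀ ω with hf_def
  have hAbdd : ∀ ω, ‖A ω‖ ≤ 1 := by
    intro ω; rcases hA01 ω with h | h <;> simp [h]
  have hf : Integrable f P := by
    apply Integrable.add
    · exact hY₁.bdd_mul ((measurable_const.sub hA)).aestronglyMeasurable
        (c := 1) (ae_of_all _ fun ω => by rcases hA01 ω with h | h <;> simp [h])
    · exact hY₀.bdd_mul hA.aestronglyMeasurable (c := 1) (ae_of_all _ hAbdd)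
  have hgf : Integrable (g * f) P :=
    hf.bdd_mul hgmeas (c := 1) (ae_of_all _ hgbdd)
  have hYint : Integrable Y P := by
    have : Integrable (fun ω => A ω * Y₁ ω + (1 - A ω) * Y₀ ω) P := by
      apply Integrable.add
      · exact hY₁.bdd_mul hA.aestronglyMeasurable (c := 1) (ae_of_all _ hAbdd)
      · exact hY₀.bdd_mul ((measurable_const.sub hA)).aestronglyMeasurable
          (c := 1) (ae_of_all _ fun ω => by rcases hA01 ω with h | h <;> simp [h])
    exact this.congr (Filter.Eventually.of_forall fun ω => (hY ω).symm)
  have hgY : Integrable (fun ω => g ω * Y ω) P :=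
    hYint.bdd_mul hgmeas (c := 1) (ae_of_all _ hgbdd)
  have hce : Integrable (P[f|m]) P := integrable_condExp
  have hlamint : Integrable lam P := hce.congr hlam.symm
  have hglam : Integrable (fun ω => g ω * lam ω) P :=
    hlamint.bdd_mul hgmeas (c := 1) (ae_of_all _ hgbdd)
  -- key: ∫ g·λ = ∫ g·f
  have key : ∫ ω, g ω * lam ω ∂P = ∫ ω, g ω * f ω ∂P := by
    have h1 : (fun ω => g ω * lam ω) =ᵐ[P] fun ω => g ω * (P[f|m]) ω := by
      filter_upwards [hlam] with ω hω using by rw [hω]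
    have h2 : P[g * f|m] =ᵐ[P] g * P[f|m] :=
      condExp_mul_of_stronglyMeasurable_left hgm hgf hf
    calc ∫ ω, g ω * lam ω ∂P = ∫ ω, (g * P[f|m]) ω ∂P := integral_congr_ae h1
      _ = ∫ ω, (P[g * f|m]) ω ∂P := (integral_congr_ae h2).symm
      _ = ∫ ω, (g * f) ω ∂P := integral_condExp hm
      _ = ∫ ω, g ω * f ω ∂P := rfl
  have hsplit : ∫ ω, (1 - S ω) * (2 * A ω - 1) * (Y ω - lam ω) ∂P
      = ∫ ω, g ω * Y ω ∂P - ∫ ω, g ω * lam ω ∂P := by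
    rw [← integral_sub hgY hglam]
    exact integral_congr_ae (Filter.Eventually.of_forall fun ω => by ring)
  have hgf' : Integrable (fun ω => g ω * f ω) P := hgf
  rw [hsplit, key, ← integral_sub hgY hgf']
  apply integral_congr_ae
  filter_upwards with ω
  rcases hA01 ω with h | h <;> rcases hS01 ω with h' | h' <;>
    simp [hg_def, hf_def, hY ω, h, h'] <;> ring
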